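/- Let r be even, k ≥ 1, p coprime to r^{k+1}, and set ω = e^{2πi/r^{k+1}} and u_n = e^{πi·p·n²/r}. For any s with 0 ≤ s < r^{k+1} and any integers a ≠ b with 0 ≤ a, b < r^k: Σ_{i=0}^{r^{k+1}-1} u_i · conj(u_{i+s}) · ω^{(a - b)·i} = 0, where the index i+s is taken mod r^{k+1}. -/

import Mathlib

open Finset Complex

private lemma exp_sq_congr (r p : ℕ) (hr0 : 0 < r) (x y : ℤ)
    (h : (2 * (r : ℤ)) ∣ x - y) :
    Complex.exp (Real.pi * Complex.I * p * (x : ℂ) ^ 2 / r) =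
      Complex.exp (Real.pi * Complex.I * p * (y : ℂ) ^ 2 / r) := by
  have hsq : (2 * (r : ℤ)) ∣ x ^ 2 - y ^ 2 := by
    refine h.trans ?_
    rw [sq_sub_sq]
    exact Dvd.intro_left _ rfl
  obtain ⟨c, hc⟩ := hsq
  have hcC : (x : ℂ) ^ 2 = (y : ℂ) ^ 2 + 2 * r * c := by
    have : (x : ℤ) ^ 2 = y ^ 2 + 2 * r * c := by linarith
    exact_mod_cast congrArg (Int.cast : ℤ → ℂ) this
  have hrC : (r : ℂ) ≠ 0 := Nat.cast_ne_zero.mpr hr0.ne'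
  rw [hcC]
  have : Real.pi * Complex.I * p * ((y : ℂ) ^ 2 + 2 * r * c) / r =
      Real.pi * Complex.I * p * (y : ℂ) ^ 2 / r +
        ((p : ℤ) * c : ℤ) * (2 * Real.pi * Complex.I) := by
    push_cast
    field_simp
  rw [this, Complex.exp_add, Complex.exp_int_mul_two_pi_mul_I, mul_one]

/-- Key Gaussian-sum lemma for the generalized Milewski construction: for `r` even,
`u_n = e^{πi·p·n²/r}` a Chu sequence of length `r^{k+1}` and `ω = e^{2πi/r^{k+1}}`,
the shifted Chu correlation twisted by the character `ω^{(a-b)i}` vanishes for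
`a ≠ b` with `0 ≤ a, b < r^k`. -/
theorem chu_twisted_correlation_vanishes (r k p : ℕ) (hr : Even r) (hr0 : 0 < r)
    (hk : 1 ≤ k) (hp : Nat.Coprime p (r ^ (k + 1)))
    (s a b : ℕ) (hs : s < r ^ (k + 1)) (ha : a < r ^ k) (hb : b < r ^ k) (hab : a ≠ b) :
    ∑ i ∈ range (r ^ (k + 1)),
      Complex.exp (Real.pi * Complex.I * p * (i : ℂ) ^ 2 / r) *
        (starRingEnd ℂ) (Complex.exp
          (Real.pi * Complex.I * p * (((i + s) % r ^ (k + 1) : ℕ) : ℂ) ^ 2 / r)) *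
        Complex.exp (2 * Real.pi * Complex.I / (r ^ (k + 1) : ℕ)) ^
          (((a : ℤ) - (b : ℤ)) * (i : ℤ)) = 0 := by
  set N := r ^ (k + 1) with hN
  have hN0 : N ≠ 0 := by positivity
  have hrC : (r : ℂ) ≠ 0 := Nat.cast_ne_zero.mpr hr0.ne'
  have hrkC : ((r : ℂ)) ^ k ≠ 0 := pow_ne_zero _ hrC
  set ζ := Complex.exp (2 * Real.pi * Complex.I / (N : ℕ)) with hzeta
  have hprim : IsPrimitiveRoot ζ N := Complex.isPrimitiveRoot_exp N hN0
  set m : ℤ := ((a : ℤ) - b) - (p : ℤ) * s * (r : ℤ) ^ k with hm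
  -- 2r ∣ N
  have h2rN : (2 * (r : ℤ)) ∣ (N : ℤ) := by
    obtain ⟨t, ht⟩ := hr
    have h1 : (2 * (r : ℤ)) ∣ (r : ℤ) ^ 2 := by
      refine ⟨t, ?_⟩
      have : (r : ℤ) = 2 * t := by exact_mod_cast ht.trans (two_mul t).symm
      rw [this]; ring
    refine h1.trans ?_
    have : ((r : ℤ)) ^ 2 ∣ (r : ℤ) ^ (k + 1) := pow_dvd_pow _ (by omega)
    simpa [hN] using this
  -- the twisted correlation term equals a geometric term
  have key : ∀ i ∈ range N,
      Complex.exp (Real.pi * Complex.I * p * (i : ℂ) ^ 2 / r) *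
        (starRingEnd ℂ) (Complex.exp
          (Real.pi * Complex.I * p * (((i + s) % N : ℕ) : ℂ) ^ 2 / r)) *
        ζ ^ (((a : ℤ) - (b : ℤ)) * (i : ℤ)) =
      Complex.exp (-(Real.pi * Complex.I * p * (s : ℂ) ^ 2 / r)) * (ζ ^ m) ^ i := by
    intro i _
    -- replace (i+s) % N by i+s inside the conjugated exponential
    have hmod : (2 * (r : ℤ)) ∣ (((i + s) % N : ℕ) : ℤ) - ((i + s : ℕ) : ℤ) := by
      refine dvd_trans h2rN ?_
      have : (((i + s) % N : ℕ) : ℤ) = ((i + s : ℕ) : ℤ) % (N : ℤ) := by push_cast; ring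
      rw [this, Int.emod_def]
      exact ⟨-(((i + s : ℕ) : ℤ) / N), by ring⟩
    have hre : Complex.exp (Real.pi * Complex.I * p * (((i + s) % N : ℕ) : ℂ) ^ 2 / r) =
        Complex.exp (Real.pi * Complex.I * p * ((i : ℂ) + s) ^ 2 / r) := by
      have := exp_sq_congr r p hr0 (((i + s) % N : ℕ) : ℤ) ((i + s : ℕ) : ℤ) hmod
      push_cast at this ⊢
      exact this
    rw [hre]
    -- compute the conjugate
    have hconj : (starRingEnd ℂ) (Complex.exp (Real.pi * Complex.I * p * ((i : ℂ) + s) ^ 2 / r)) =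
        Complex.exp (-(Real.pi * Complex.I * p * ((i : ℂ) + s) ^ 2 / r)) := by
      rw [← Complex.exp_conj]
      congr 1
      simp [map_div₀, map_mul, map_pow, Complex.conj_I]
      ring
    rw [hconj]
    -- turn zpowers of ζ into exponentials
    have hz1 : ζ ^ (((a : ℤ) - (b : ℤ)) * (i : ℤ)) =
        Complex.exp (((((a : ℤ) - (b : ℤ)) * (i : ℤ) : ℤ) : ℂ) *
          (2 * Real.pi * Complex.I / (N : ℕ))) := by
      rw [hzeta, Complex.exp_int_mul]
    have hz2 : (ζ ^ m) ^ i = Complex.exp (((m * (i : ℤ) : ℤ) : ℂ) *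
        (2 * Real.pi * Complex.I / (N : ℕ))) := by
      rw [hzeta, Complex.exp_int_mul, ← zpow_natCast (_ ^ m), ← zpow_mul]
    rw [hz1, hz2]
    simp only [mul_assoc, ← Complex.exp_add]
    congr 1
    have hNC : ((N : ℕ) : ℂ) = (r : ℂ) * (r : ℂ) ^ k := by
      rw [hN]; push_cast; ring
    rw [hNC, hm]
    push_cast
    field_simp
    ring
  rw [Finset.sum_congr rfl key, ← Finset.mul_sum]
  have hne : ζ ^ m ≠ 1 := by
    rw [Ne, hprim.zpow_eq_one_iff_dvd m]
    intro hdvd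
    have hrkN : ((r : ℤ)) ^ k ∣ (N : ℤ) := by
      have : ((r : ℤ)) ^ k ∣ (r : ℤ) ^ (k + 1) := pow_dvd_pow _ (by omega)
      simpa [hN] using this
    have h1 : ((r : ℤ)) ^ k ∣ m := hrkN.trans hdvd
    have h2 : ((r : ℤ)) ^ k ∣ ((a : ℤ) - b) := by
      have : ((a : ℤ) - b) = m + (p : ℤ) * s * (r : ℤ) ^ k := by rw [hm]; ring
      rw [this]
      exact dvd_add h1 (Dvd.intro_left _ rfl)
    have habs : |((a : ℤ) - b)| < (r : ℤ) ^ k := by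
      rw [abs_sub_lt_iff]
      have ha' : (a : ℤ) < (r : ℤ) ^ k := by exact_mod_cast ha
      have hb' : (b : ℤ) < (r : ℤ) ^ k := by exact_mod_cast hb
      have ha0 : (0 : ℤ) ≤ a := Int.natCast_nonneg a
      have hb0 : (0 : ℤ) ≤ b := Int.natCast_nonneg b
      constructor <;> linarith
    have := Int.eq_zero_of_abs_lt_dvd h2 habs
    have : (a : ℤ) = b := by linarith
    exact hab (by exact_mod_cast this)
  rw [geom_sum_eq hne]
  have hpow : (ζ ^ m) ^ N = 1 := by
    rw [← zpow_natCast (ζ ^ m), ← zpow_mul, mul_comm, zpow_mul, zpow_natCast,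
      hprim.pow_eq_one, one_zpow]
  rw [hpow, sub_self, zero_div, mul_zero]
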